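/- For integers d ≥ 2, n ≥ 1, the equation d(F - (1-F)/(2^{nd}-1))² = 1 has unique solution in (0,1] given by F = (2^{nd} + √d - 1)/(2^{nd} √d). This threshold is strictly greater than the QFI-based threshold F_th(d,n) = 2^{-nd} + (2^{nd}-1)(2^{nd}-2+sqrt((2^{nd}-2)²+2^{nd+3}d))/(2^{2nd+1}d). -/

import Mathlib

set_option maxHeartbeats 800000

theorem stmt_12 (d n : ℕ) (hd : 2 ≤ d) (hn : 1 ≤ n) :
    let Fm : ℝ := ((2:ℝ)^(n*d) + Real.sqrt d - 1) / ((2:ℝ)^(n*d) * Real.sqrt d)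
    let Fth : ℝ := 1 / 2^(n*d) + ((2:ℝ)^(n*d) - 1) * ((2:ℝ)^(n*d) - 2 +
      Real.sqrt (((2:ℝ)^(n*d) - 2)^2 + 2^(n*d+3) * d)) / ((2:ℝ)^(2*(n*d)+1) * d)
    Fm ∈ Set.Ioc (0:ℝ) 1 ∧
    (d : ℝ) * (Fm - (1 - Fm) / ((2:ℝ)^(n*d) - 1))^2 = 1 ∧
    (∀ F ∈ Set.Ioc (0:ℝ) 1, (d : ℝ) * (F - (1 - F) / ((2:ℝ)^(n*d) - 1))^2 = 1 → F = Fm) ∧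
    Fth < Fm := by
  intro Fm Fth
  have hnd : 2 ≤ n * d := le_trans hd (Nat.le_mul_of_pos_left d hn)
  set N : ℝ := (2:ℝ)^(n*d) with hNdef
  have hN4 : (4:ℝ) ≤ N := by
    calc (4:ℝ) = 2^2 := by norm_num
    _ ≤ 2^(n*d) := by apply pow_le_pow_right₀ (by norm_num) hnd
  have hN0 : (0:ℝ) < N := by positivity
  have hN1 : (1:ℝ) < N := by linarith
  have hdN : (d:ℝ) + 1 ≤ N := by
    have h1 : d < 2^d := Nat.lt_two_pow_self
    have h2 : 2^d ≤ 2^(n*d) := Nat.pow_le_pow_right (by norm_num) (Nat.le_mul_of_pos_left d hn)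
    have h3 : d + 1 ≤ 2^(n*d) := by omega
    have := (Nat.cast_le (α := ℝ)).mpr h3
    push_cast at this
    rw [hNdef]; linarith
  have hd2 : (2:ℝ) ≤ (d:ℝ) := by exact_mod_cast hd
  set s : ℝ := Real.sqrt d with hsdef
  have hs0 : 0 ≤ s := Real.sqrt_nonneg _
  have hs2 : s^2 = (d:ℝ) := Real.sq_sqrt (by positivity)
  have hs1 : 1 < s := by nlinarith [sq_nonneg (s-1), sq_nonneg (s+1)]
  have hsd : s < (d:ℝ) := by nlinarith
  have hsne : s ≠ 0 := by linarith
  have hN1ne : N - 1 ≠ 0 := by intro h; linarith [sub_eq_zero.mp h]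
  have hFm : Fm = (N + s - 1)/(N*s) := rfl
  have hFth : Fth = 1/N + (N-1)*(N-2 + Real.sqrt ((N-2)^2 + (2:ℝ)^(n*d+3)*(d:ℝ))) / ((2:ℝ)^(2*(n*d)+1)*(d:ℝ)) := rfl
  have hpow1 : (2:ℝ)^(n*d+3) = 8*N := by
    rw [pow_add, ← hNdef]; ring
  have hpow2 : (2:ℝ)^(2*(n*d)+1) = 2*N^2 := by
    rw [pow_succ, two_mul, pow_add, ← hNdef]; ring
  clear_value Fm Fth N s
  have hspos : (0:ℝ) < s := by linarith
  have hNs : (0:ℝ) < N*s := mul_pos hN0 hspos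
  refine ⟨⟨?_, ?_⟩, ?_, ?_, ?_⟩
  · rw [hFm]
    exact div_pos (by nlinarith) hNs
  · rw [hFm, div_le_one hNs]
    nlinarith [mul_nonneg (by linarith : (0:ℝ) ≤ N - 1) (by linarith : (0:ℝ) ≤ s - 1)]
  · have key : (N + s - 1)/(N*s) - (1 - (N + s - 1)/(N*s))/(N-1) = 1/s := by
      field_simp
      ring
    rw [hFm, key]
    rw [div_pow, one_pow]
    field_simp
    linarith [hs2]
  · intro F hF hEq
    have hFNs : F - (1-F)/(N-1) = (F*N - 1)/(N-1) := by
      field_simp; ring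
    rw [hFNs] at hEq
    have hEq2 : s^2 * (F*N - 1)^2 = (N-1)^2 := by
      rw [hs2]
      field_simp at hEq
      linarith [hEq]
    have hfact : ((F*N - 1)*s - (N-1)) * ((F*N - 1)*s + (N-1)) = 0 := by
      linear_combination hEq2
    rcases mul_eq_zero.mp hfact with h | h
    · rw [hFm, eq_div_iff (ne_of_gt hNs)]
      nlinarith [h]
    · exfalso
      have hF0 : (0:ℝ) < F := hF.1
      have hs0' : (0:ℝ) < s := by linarith
      have e : F*N*s = s - N + 1 := by linear_combination h
      linarith [e, mul_pos (mul_pos hF0 hN0) hs0', hsd, hdN]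
  · set R := Real.sqrt ((N-2)^2 + (2:ℝ)^(n*d+3)*(d:ℝ)) with hRdef
    clear_value R
    have hd0 : (0:ℝ) < (d:ℝ) := by linarith
    have hR0 : 0 ≤ R := hRdef ▸ Real.sqrt_nonneg _
    have hR2 : R^2 = (N-2)^2 + 8*N*(d:ℝ) := by
      rw [hRdef, Real.sq_sqrt (by positivity), hpow1]
    have hkey : N - 2 + R < 2*N*s := by
      have hpos : 0 < 2*N*s - (N-2) := by
        have h2s : 0 < N*(2*s-1) := mul_pos hN0 (by linarith)
        linarith [h2s]
      have hsq : (2*N*s - (N-2))^2 - R^2 = 4*N*(N-2)*((d:ℝ)-s) := by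
        rw [hR2]; linear_combination (4*N^2) * hs2
      have hsq2 : R^2 < (2*N*s - (N-2))^2 := by
        have hp := mul_pos (mul_pos (mul_pos (by norm_num : (0:ℝ) < 4) hN0) (by linarith : (0:ℝ) < N - 2)) (by linarith : (0:ℝ) < (d:ℝ) - s)
        linarith [hsq, hp]
      have := lt_of_pow_lt_pow_left₀ 2 hpos.le hsq2
      linarith
    have hFm' : Fm = 1/N + (N-1)/(N*s) := by
      rw [hFm, div_add_div _ _ (ne_of_gt hN0) (ne_of_gt hNs),
        div_eq_div_iff (ne_of_gt hNs) (ne_of_gt (mul_pos hN0 hNs))]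
      ring
    rw [hFth, hFm', hpow2]
    have hsuff : (N-1)*(N-2+R)/(2*N^2*(d:ℝ)) < (N-1)/(N*s) := by
      rw [div_lt_div_iff₀ (mul_pos (by positivity : (0:ℝ) < 2*N^2) hd0) (mul_pos hN0 (by linarith : (0:ℝ) < s))]
      have h1 : (0:ℝ) < (N-1)*(N*s) := mul_pos (by linarith) hNs
      have hmul := mul_lt_mul_of_pos_left hkey h1
      have hrhs : (N-1)*(2*N^2*(d:ℝ)) = ((N-1)*(N*s))*(2*N*s) := by
        rw [← hs2]; ring
      linarith [hmul, hrhs]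
    linarith [hsuff]
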